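/- arXiv:1101.4309 — 3 statements merged into one kernel-verified Lean document; each statement's English description precedes it below -/
import Mathlib

section
/- Cauchy Majorant Method in several variables: Let φ₁,…,φₙ be power series in n complex variables y = (y₁,…,yₙ), each convergent on a neighborhood of 0 ∈ ℂⁿ and of order ≥ 2 (no constant or linear terms), and let ζ₁,…,ζₙ be formal power series in y of order ≥ 2. If there exists δ > 0 such that δ·ζ̄ᵢ ≺ φ̄ᵢ(y₁ + ζ̄₁, …, yₙ + ζ̄ₙ) for every i = 1,…,n, then each formal series ζᵢ is convergent on some neighborhood of 0 ∈ ℂⁿ (has positive radius of convergence). -/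
open Filter Topology

noncomputable section

/-- The majorant of a multivariate formal power series: the series of the absolute
values (norms) of its coefficients. -/
def majorant {n : ℕ} (ξ : MvPowerSeries (Fin n) ℂ) : MvPowerSeries (Fin n) ℝ :=
  fun Q => ‖MvPowerSeries.coeff Q ξ‖

/-- The coefficient at `Q` of the substitution `φ(g 0, …, g (n-1))`, when each `g j` has
zero constant term: only multi-indices `P` with `|P| ≤ |Q|` (in particular `P` bounded
componentwise by `|Q|`) contribute to the coefficient of the composed series. -/
def substCoeff {n : ℕ} (φ : MvPowerSeries (Fin n) ℝ)
    (g : Fin n → MvPowerSeries (Fin n) ℝ) (Q : Fin n →₀ ℕ) : ℝ :=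
  ∑ P ∈ Finset.Icc (0 : Fin n →₀ ℕ)
      (Finsupp.equivFunOnFinite.symm fun _ : Fin n => Q.sum fun _ k => k),
    MvPowerSeries.coeff P φ * MvPowerSeries.coeff Q (∏ j : Fin n, g j ^ P j)

namespace CMM
open MvPowerSeries Finset
variable {n : ℕ}


def deg (Q : Fin n →₀ ℕ) : ℕ := Q.sum fun _ k => k

lemma deg_add (Q Q' : Fin n →₀ ℕ) : deg (Q + Q') = deg Q + deg Q' :=
  Finsupp.sum_add_index' (fun _ => rfl) (fun _ _ _ => rfl)

lemma deg_eq_sum (Q : Fin n →₀ ℕ) : deg Q = ∑ j : Fin n, Q j :=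
  Finsupp.sum_fintype _ _ (fun _ => rfl)

lemma apply_le_deg (Q : Fin n →₀ ℕ) (j : Fin n) : Q j ≤ deg Q := by
  rw [deg_eq_sum]
  exact Finset.single_le_sum (fun _ _ => Nat.zero_le _) (Finset.mem_univ j)

lemma deg_eq_zero {Q : Fin n →₀ ℕ} (h : deg Q = 0) : Q = 0 := by
  rw [deg_eq_sum] at h
  ext j
  exact (Finset.sum_eq_zero_iff.mp h) j (Finset.mem_univ j)

def DN (n N : ℕ) : Finset (Fin n →₀ ℕ) :=
  (Finset.Icc 0 (Finsupp.equivFunOnFinite.symm fun _ : Fin n => N)).filter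
    (fun Q => deg Q ≤ N)

lemma mem_DN {N : ℕ} {Q : Fin n →₀ ℕ} : Q ∈ DN n N ↔ deg Q ≤ N := by
  simp only [DN, Finset.mem_filter, Finset.mem_Icc, and_iff_right_iff_imp]
  intro h
  refine ⟨zero_le, ?_⟩
  intro j
  simpa using (apply_le_deg Q j).trans h

lemma mem_Icc_of_deg_le {N : ℕ} {Q : Fin n →₀ ℕ} (h : deg Q ≤ N) :
    Q ∈ Finset.Icc (0 : Fin n →₀ ℕ) (Finsupp.equivFunOnFinite.symm fun _ : Fin n => N) := by
  rw [Finset.mem_Icc]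
  refine ⟨zero_le, ?_⟩
  intro j
  simpa using (apply_le_deg Q j).trans h

def NN (f : MvPowerSeries (Fin n) ℝ) : Prop := ∀ Q, 0 ≤ coeff Q f

lemma NN.add {f g : MvPowerSeries (Fin n) ℝ} (hf : NN f) (hg : NN g) : NN (f + g) :=
  fun Q => by rw [map_add]; exact add_nonneg (hf Q) (hg Q)

lemma NN.mul {f g : MvPowerSeries (Fin n) ℝ} (hf : NN f) (hg : NN g) : NN (f * g) := by
  classical
  intro Q
  rw [coeff_mul]
  exact Finset.sum_nonneg fun p _ => mul_nonneg (hf p.1) (hg p.2)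

lemma NN.one : NN (1 : MvPowerSeries (Fin n) ℝ) := by
  intro Q
  rw [MvPowerSeries.coeff_one]
  split <;> norm_num

lemma NN.prod {ι : Type*} (s : Finset ι) (f : ι → MvPowerSeries (Fin n) ℝ)
    (hf : ∀ i ∈ s, NN (f i)) : NN (∏ i ∈ s, f i) := by
  classical
  induction s using Finset.induction_on with
  | empty => simpa using NN.one
  | insert _ _ hx ih =>
    rw [Finset.prod_insert hx]
    exact NN.mul (hf _ (Finset.mem_insert_self _ _))
      (ih fun i hi => hf i (Finset.mem_insert_of_mem hi))

lemma NN.pow {f : MvPowerSeries (Fin n) ℝ} (hf : NN f) (k : ℕ) : NN (f ^ k) := by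
  induction k with
  | zero => simpa using NN.one
  | succ k ih => rw [pow_succ]; exact ih.mul hf

lemma NN.X (j : Fin n) : NN (MvPowerSeries.X j : MvPowerSeries (Fin n) ℝ) := by
  intro Q
  rw [MvPowerSeries.coeff_X]
  split <;> norm_num

lemma NN.majorant (ξ : MvPowerSeries (Fin n) ℂ) : NN (_root_.majorant ξ) := by
  intro Q
  show (0:ℝ) ≤ ‖MvPowerSeries.coeff Q ξ‖
  exact norm_nonneg _

lemma coeff_majorant (ξ : MvPowerSeries (Fin n) ℂ) (Q : Fin n →₀ ℕ) :
    coeff Q (_root_.majorant ξ) = ‖MvPowerSeries.coeff Q ξ‖ := rfl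

/-- Truncated weighted sum of coefficients up to total degree `N`. -/
def T (N : ℕ) (r : ℝ) (f : MvPowerSeries (Fin n) ℝ) : ℝ :=
  ∑ Q ∈ DN n N, coeff Q f * r ^ deg Q

lemma T_nonneg {N : ℕ} {r : ℝ} {f : MvPowerSeries (Fin n) ℝ} (hf : NN f) (hr : 0 ≤ r) :
    0 ≤ T N r f :=
  Finset.sum_nonneg fun Q _ => mul_nonneg (hf Q) (pow_nonneg hr _)

lemma T_mono {N M : ℕ} {r : ℝ} {f : MvPowerSeries (Fin n) ℝ} (hf : NN f) (hr : 0 ≤ r)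
    (h : N ≤ M) : T N r f ≤ T M r f := by
  apply Finset.sum_le_sum_of_subset_of_nonneg
  · intro Q hQ
    rw [mem_DN] at *
    exact hQ.trans h
  · exact fun Q _ _ => mul_nonneg (hf Q) (pow_nonneg hr _)

lemma T_one_le {N : ℕ} {r : ℝ} : T N r (1 : MvPowerSeries (Fin n) ℝ) ≤ 1 := by
  classical
  unfold T
  rw [Finset.sum_eq_single (0 : Fin n →₀ ℕ)]
  · simp [MvPowerSeries.coeff_one, deg]
  · intro Q _ hQ
    rw [MvPowerSeries.coeff_one, if_neg hQ, zero_mul]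
  · intro h
    exact absurd (mem_DN.mpr (by simp [deg])) h

/-- The two-sided multiplicativity bound for truncated sums. -/
lemma T_mul_le {N : ℕ} {r : ℝ} {f g : MvPowerSeries (Fin n) ℝ}
    (hf : NN f) (hg : NN g) (hr : 0 ≤ r) :
    T N r (f * g) ≤ T N r f * T N r g := by
  classical
  have key : T N r (f * g) =
      ∑ p ∈ (DN n N).biUnion (fun Q => Finset.HasAntidiagonal.antidiagonal Q),
        (coeff p.1 f * r ^ deg p.1) * (coeff p.2 g * r ^ deg p.2) := by
    rw [Finset.sum_biUnion]
    · unfold T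
      apply Finset.sum_congr rfl
      intro Q _
      rw [coeff_mul, Finset.sum_mul]
      apply Finset.sum_congr rfl
      intro p hp
      rw [Finset.HasAntidiagonal.mem_antidiagonal] at hp
      rw [← hp, deg_add, pow_add]
      ring
    · intro Q₁ _ Q₂ _ hne
      apply Finset.disjoint_left.mpr
      intro p hp1 hp2
      rw [Finset.HasAntidiagonal.mem_antidiagonal] at hp1 hp2
      exact hne (hp1 ▸ hp2)
  rw [key, T, T, Finset.sum_mul_sum]
  rw [← Finset.sum_product']
  apply Finset.sum_le_sum_of_subset_of_nonneg
  · intro p hp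
    rw [Finset.mem_biUnion] at hp
    obtain ⟨Q, hQ, hp⟩ := hp
    rw [Finset.HasAntidiagonal.mem_antidiagonal] at hp
    rw [mem_DN] at hQ
    rw [Finset.mem_product, mem_DN, mem_DN]
    constructor
    · calc deg p.1 ≤ deg p.1 + deg p.2 := Nat.le_add_right _ _
        _ = deg Q := by rw [← deg_add, hp]
        _ ≤ N := hQ
    · calc deg p.2 ≤ deg p.1 + deg p.2 := Nat.le_add_left _ _
        _ = deg Q := by rw [← deg_add, hp]
        _ ≤ N := hQ
  · intro p _ _
    exact mul_nonneg (mul_nonneg (hf p.1) (pow_nonneg hr _))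
      (mul_nonneg (hg p.2) (pow_nonneg hr _))

/-- When both factors have zero constant term, the truncation level drops by one. -/
lemma T_mul_le_pred {N : ℕ} {r : ℝ} {f g : MvPowerSeries (Fin n) ℝ}
    (hf : NN f) (hg : NN g) (hr : 0 ≤ r)
    (hf0 : constantCoeff f = 0) (hg0 : constantCoeff g = 0) :
    T N r (f * g) ≤ T (N - 1) r f * T (N - 1) r g := by
  classical
  have key : T N r (f * g) =
      ∑ p ∈ (DN n N).biUnion (fun Q => Finset.HasAntidiagonal.antidiagonal Q),
        (coeff p.1 f * r ^ deg p.1) * (coeff p.2 g * r ^ deg p.2) := by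
    rw [Finset.sum_biUnion]
    · unfold T
      apply Finset.sum_congr rfl
      intro Q _
      rw [coeff_mul, Finset.sum_mul]
      apply Finset.sum_congr rfl
      intro p hp
      rw [Finset.HasAntidiagonal.mem_antidiagonal] at hp
      rw [← hp, deg_add, pow_add]
      ring
    · intro Q₁ _ Q₂ _ hne
      apply Finset.disjoint_left.mpr
      intro p hp1 hp2
      rw [Finset.HasAntidiagonal.mem_antidiagonal] at hp1 hp2
      exact hne (hp1 ▸ hp2)
  rw [key, T, T, Finset.sum_mul_sum, ← Finset.sum_product']
  set F : ((Fin n →₀ ℕ) × (Fin n →₀ ℕ)) → ℝ := fun p =>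
    (coeff p.1 f * r ^ deg p.1) * (coeff p.2 g * r ^ deg p.2) with hF
  have hFnn : ∀ p, 0 ≤ F p := fun p =>
    mul_nonneg (mul_nonneg (hf p.1) (pow_nonneg hr _))
      (mul_nonneg (hg p.2) (pow_nonneg hr _))
  have hzero : ∀ p ∈ (DN n N).biUnion (fun Q => Finset.HasAntidiagonal.antidiagonal Q),
      p ∉ (DN n (N-1)) ×ˢ (DN n (N-1)) → F p = 0 := by
    intro p hp hnp
    rw [Finset.mem_biUnion] at hp
    obtain ⟨Q, hQ, hp⟩ := hp
    rw [Finset.HasAntidiagonal.mem_antidiagonal] at hp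
    rw [mem_DN] at hQ
    have hdeg : deg p.1 + deg p.2 ≤ N := by rw [← deg_add, hp]; exact hQ
    rw [Finset.mem_product, mem_DN, mem_DN, not_and_or] at hnp
    rcases hnp with h1 | h2
    · -- deg p.1 > N - 1, so deg p.1 ≥ N, so deg p.2 = 0 or p.1 itself big... 
      push_neg at h1
      -- deg p.1 ≥ N would force deg p.2 = 0
      have : deg p.2 = 0 := by omega
      have hp2 : p.2 = 0 := deg_eq_zero this
      have : coeff p.2 g = 0 := by
        rw [hp2]; exact hg0
      simp [hF, this]
    · push_neg at h2
      have : deg p.1 = 0 := by omega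
      have hp1 : p.1 = 0 := deg_eq_zero this
      have : coeff p.1 f = 0 := by
        rw [hp1]; exact hf0
      simp [hF, this]
  calc ∑ p ∈ (DN n N).biUnion (fun Q => Finset.HasAntidiagonal.antidiagonal Q), F p
      = ∑ p ∈ ((DN n N).biUnion (fun Q => Finset.HasAntidiagonal.antidiagonal Q)).filter
          (fun p => p ∈ (DN n (N-1)) ×ˢ (DN n (N-1))), F p := by
        rw [Finset.sum_filter_of_ne]
        intro p hp hne
        by_contra hnp
        exact hne (hzero p hp hnp)
    _ ≤ ∑ p ∈ (DN n (N-1)) ×ˢ (DN n (N-1)), F p := by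
        apply Finset.sum_le_sum_of_subset_of_nonneg
        · intro p hp
          exact (Finset.mem_filter.mp hp).2
        · intro p _ _
          exact hFnn p

lemma T_prod_le {ι : Type*} {N : ℕ} {r : ℝ} (s : Finset ι)
    (f : ι → MvPowerSeries (Fin n) ℝ) (hf : ∀ i ∈ s, NN (f i)) (hr : 0 ≤ r) :
    T N r (∏ i ∈ s, f i) ≤ ∏ i ∈ s, T N r (f i) := by
  classical
  induction s using Finset.induction_on with
  | empty => simpa using T_one_le
  | @insert a s ha ih =>
    rw [Finset.prod_insert ha, Finset.prod_insert ha]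
    calc T N r (f a * ∏ i ∈ s, f i)
        ≤ T N r (f a) * T N r (∏ i ∈ s, f i) :=
          T_mul_le (hf a (Finset.mem_insert_self _ _))
            (NN.prod s f fun i hi => hf i (Finset.mem_insert_of_mem hi)) hr
      _ ≤ T N r (f a) * ∏ i ∈ s, T N r (f i) := by
          apply mul_le_mul_of_nonneg_left
            (ih fun i hi => hf i (Finset.mem_insert_of_mem hi))
            (T_nonneg (hf a (Finset.mem_insert_self _ _)) hr)

lemma T_pow_le {N : ℕ} {r : ℝ} {f : MvPowerSeries (Fin n) ℝ} (hf : NN f) (hr : 0 ≤ r)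
    (k : ℕ) : T N r (f ^ k) ≤ (T N r f) ^ k := by
  induction k with
  | zero => simpa using T_one_le
  | succ k ih =>
    rw [pow_succ, pow_succ]
    calc T N r (f ^ k * f) ≤ T N r (f ^ k) * T N r f := T_mul_le (hf.pow k) hf hr
      _ ≤ (T N r f) ^ k * T N r f :=
          mul_le_mul_of_nonneg_right ih (T_nonneg hf hr)

lemma deg_single (j : Fin n) : deg (Finsupp.single j 1) = 1 := by
  simp [deg, Finsupp.sum_single_index]

lemma T_X_le {N : ℕ} {r : ℝ} (hr : 0 ≤ r) (j : Fin n) :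
    T N r (MvPowerSeries.X j : MvPowerSeries (Fin n) ℝ) ≤ r := by
  classical
  calc T N r (MvPowerSeries.X j : MvPowerSeries (Fin n) ℝ)
      ≤ ∑ Q ∈ DN n N, (if Q = Finsupp.single j 1 then r else 0) := by
        apply Finset.sum_le_sum
        intro Q _
        rw [MvPowerSeries.coeff_X]
        split
        · next h => subst h; rw [deg_single, pow_one, one_mul]
        · simp
    _ = if Finsupp.single j 1 ∈ DN n N then r else 0 := Finset.sum_ite_eq' _ _ _
    _ ≤ r := by split <;> simp [hr]

lemma T_pow_prod_le {N : ℕ} {r : ℝ} (e : Fin n → MvPowerSeries (Fin n) ℝ)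
    (he : ∀ j, NN (e j)) (he0 : ∀ j, constantCoeff (e j) = 0)
    (hr : 0 ≤ r) (P : Fin n →₀ ℕ) (hP : 2 ≤ deg P) (x : ℝ)
    (hx : ∀ j, T (N - 1) r (e j) ≤ x) :
    T N r (∏ j : Fin n, e j ^ P j) ≤ x ^ deg P := by
  classical
  -- find an index with positive exponent
  have hPpos : ∃ j₀ : Fin n, 1 ≤ P j₀ := by
    by_contra h
    push_neg at h
    have : deg P = 0 := by
      rw [deg_eq_sum]
      exact Finset.sum_eq_zero fun j _ => by have := h j; omega
    omega
  obtain ⟨j₀, hj₀⟩ := hPpos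
  set t : Fin n → ℝ := fun j => T (N - 1) r (e j) with ht
  have htnn : ∀ j, 0 ≤ t j := fun j => T_nonneg (he j) hr
  have hxnn : 0 ≤ x := (htnn j₀).trans (hx j₀)
  set g : MvPowerSeries (Fin n) ℝ :=
    e j₀ ^ (P j₀ - 1) * ∏ j ∈ Finset.univ.erase j₀, e j ^ P j with hg
  have hprodeq : (∏ j : Fin n, e j ^ P j) = e j₀ * g := by
    rw [hg, ← mul_assoc, ← pow_succ' (e j₀) (P j₀ - 1)]
    have : P j₀ - 1 + 1 = P j₀ := by omega
    rw [this]
    exact (Finset.mul_prod_erase Finset.univ (fun j => e j ^ P j)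
      (Finset.mem_univ j₀)).symm
  have hgNN : NN g :=
    ((he j₀).pow _).mul (NN.prod _ _ fun j _ => (he j).pow _)
  have hg0 : constantCoeff g = 0 := by
    rcases Nat.lt_or_ge 1 (P j₀) with h2 | h2
    · rw [hg, map_mul, map_pow, he0 j₀, zero_pow (by omega), zero_mul]
    · -- P j₀ = 1, so some other index has positive exponent
      have h1 : P j₀ = 1 := le_antisymm h2 hj₀
      have : ∃ j ∈ Finset.univ.erase j₀, 1 ≤ P j := by
        by_contra h
        push_neg at h
        have hs : ∑ j ∈ Finset.univ.erase j₀, P j = 0 :=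
          Finset.sum_eq_zero fun j hj => by have := h j hj; omega
        have hd : deg P = P j₀ + ∑ j ∈ Finset.univ.erase j₀, P j := by
          rw [deg_eq_sum,
            ← Finset.add_sum_erase Finset.univ (fun j => P j) (Finset.mem_univ j₀)]
        omega
      obtain ⟨j₁, hj₁mem, hj₁⟩ := this
      rw [hg, map_mul, map_prod]
      rw [Finset.prod_eq_zero hj₁mem (by rw [map_pow, he0 j₁, zero_pow (by omega)])]
      ring
  calc T N r (∏ j : Fin n, e j ^ P j) = T N r (e j₀ * g) := by rw [hprodeq]
    _ ≤ t j₀ * T (N - 1) r g := T_mul_le_pred (he j₀) hgNN hr (he0 j₀) hg0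
    _ ≤ x * (x ^ (P j₀ - 1) * ∏ j ∈ Finset.univ.erase j₀, x ^ P j) := by
        apply mul_le_mul (hx j₀) ?_ (T_nonneg hgNN hr) hxnn
        calc T (N - 1) r g
            ≤ T (N-1) r (e j₀ ^ (P j₀ - 1)) * T (N-1) r (∏ j ∈ Finset.univ.erase j₀, e j ^ P j) :=
              T_mul_le ((he j₀).pow _) (NN.prod _ _ fun j _ => (he j).pow _) hr
          _ ≤ x ^ (P j₀ - 1) * ∏ j ∈ Finset.univ.erase j₀, x ^ P j := by
              apply mul_le_mul
              · exact (T_pow_le (he j₀) hr _).trans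
                  (pow_le_pow_left₀ (htnn j₀) (hx j₀) _)
              · refine (T_prod_le _ _ (fun j _ => (he j).pow _) hr).trans ?_
                apply Finset.prod_le_prod (fun j _ => T_nonneg ((he j).pow _) hr)
                intro j _
                exact (T_pow_le (he j) hr _).trans (pow_le_pow_left₀ (htnn j) (hx j) _)
              · exact T_nonneg (NN.prod _ _ fun j _ => (he j).pow _) hr
              · exact pow_nonneg hxnn _
    _ = x ^ deg P := by
        rw [← mul_assoc, ← pow_succ' x (P j₀ - 1)]
        have h1 : P j₀ - 1 + 1 = P j₀ := by omega
        rw [h1, Finset.prod_pow_eq_pow_sum, ← pow_add, deg_eq_sum]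
        congr 1
        rw [← Finset.add_sum_erase Finset.univ (fun j => P j) (Finset.mem_univ j₀)]

lemma T_add {N : ℕ} {r : ℝ} (f g : MvPowerSeries (Fin n) ℝ) :
    T N r (f + g) = T N r f + T N r g := by
  unfold T
  rw [← Finset.sum_add_distrib]
  apply Finset.sum_congr rfl
  intro Q _
  rw [map_add]
  ring

lemma substCoeff_nonneg (φ : MvPowerSeries (Fin n) ℝ) (g : Fin n → MvPowerSeries (Fin n) ℝ)
    (hφ : NN φ) (hg : ∀ j, NN (g j)) (Q : Fin n →₀ ℕ) :
    0 ≤ substCoeff φ g Q := by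
  apply Finset.sum_nonneg
  intro P _
  exact mul_nonneg (hφ P) (NN.prod _ _ (fun j _ => (hg j).pow _) Q)

end CMM
open CMM

/-- **Cauchy Majorant Method in several variables.** Let `φ₁, …, φₙ` be convergent power
series in `n` variables of order `≥ 2` and `ζ₁, …, ζₙ` formal power series of order `≥ 2`.
If there is `δ > 0` with `δ·ζ̄ᵢ ≺ φ̄ᵢ(y₁ + ζ̄₁, …, yₙ + ζ̄ₙ)` for every `i`, then each `ζᵢ`
is convergent on a neighborhood of `0 ∈ ℂⁿ` (has positive radius of convergence). -/
theorem cauchy_majorant_method {n : ℕ}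
    (φ ζ : Fin n → MvPowerSeries (Fin n) ℂ)
    (hφconv : ∀ i, ∃ r : ℝ, 0 < r ∧
      Summable fun Q : Fin n →₀ ℕ =>
        ‖MvPowerSeries.coeff Q (φ i)‖ * r ^ (Q.sum fun _ k => k))
    (hφord : ∀ i (Q : Fin n →₀ ℕ), (Q.sum fun _ k => k) ≤ 1 →
      MvPowerSeries.coeff Q (φ i) = 0)
    (hζord : ∀ i (Q : Fin n →₀ ℕ), (Q.sum fun _ k => k) ≤ 1 →
      MvPowerSeries.coeff Q (ζ i) = 0)
    (δ : ℝ) (hδ : 0 < δ)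
    (hmaj : ∀ i (Q : Fin n →₀ ℕ),
      δ * ‖MvPowerSeries.coeff Q (ζ i)‖ ≤
        |substCoeff (majorant (φ i))
          (fun j => (MvPowerSeries.X j : MvPowerSeries (Fin n) ℝ) + majorant (ζ j)) Q|) :
    ∃ r : ℝ, 0 < r ∧ ∀ i,
      Summable fun Q : Fin n →₀ ℕ =>
        ‖MvPowerSeries.coeff Q (ζ i)‖ * r ^ (Q.sum fun _ k => k) := by
  classical
  rcases isEmpty_or_nonempty (Fin n) with hE | hNE
  · exact ⟨1, one_pos, fun i => hE.elim i⟩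
  choose r₀f hr₀f hsumf using hφconv
  have hFn : (Finset.univ : Finset (Fin n)).Nonempty := Finset.univ_nonempty
  set r₀ : ℝ := Finset.univ.inf' hFn r₀f with hr₀
  have hr₀pos : 0 < r₀ := (Finset.lt_inf'_iff hFn).mpr fun i _ => hr₀f i
  have hr₀le : ∀ i, r₀ ≤ r₀f i := fun i => Finset.inf'_le _ (Finset.mem_univ i)
  have hsum : ∀ i, Summable fun Q : Fin n →₀ ℕ =>
      ‖MvPowerSeries.coeff Q (φ i)‖ * r₀ ^ deg Q := by
    intro i
    apply Summable.of_nonneg_of_le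
      (fun Q => mul_nonneg (norm_nonneg _) (pow_nonneg hr₀pos.le _))
      (fun Q => ?_) (hsumf i)
    exact mul_le_mul_of_nonneg_left
      (pow_le_pow_left₀ hr₀pos.le (hr₀le i) _) (norm_nonneg _)
  set A : ℝ := ∑ i : Fin n, ∑' Q : Fin n →₀ ℕ,
      ‖MvPowerSeries.coeff Q (φ i)‖ * r₀ ^ deg Q with hA
  have hAnn : 0 ≤ A :=
    Finset.sum_nonneg fun i _ => tsum_nonneg fun Q =>
      mul_nonneg (norm_nonneg _) (pow_nonneg hr₀pos.le _)
  set r : ℝ := min (r₀ / 2) (δ * r₀ ^ 2 / (4 * (A + 1))) with hrdef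
  have h4A : (0:ℝ) < 4 * (A + 1) := by nlinarith
  have hrpos : 0 < r :=
    lt_min (by positivity) (div_pos (by positivity) h4A)
  have hrr₀ : r ≤ r₀ / 2 := min_le_left _ _
  have hrA : r ≤ δ * r₀ ^ 2 / (4 * (A + 1)) := min_le_right _ _
  -- the series e j = X j + majorant (ζ j)
  set e : Fin n → MvPowerSeries (Fin n) ℝ :=
    fun j => (MvPowerSeries.X j : MvPowerSeries (Fin n) ℝ) + majorant (ζ j) with he
  have heNN : ∀ j, NN (e j) := fun j => (NN.X j).add (NN.majorant _)
  have he0 : ∀ j, MvPowerSeries.constantCoeff (e j) = 0 := by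
    intro j
    rw [he]
    simp only [map_add, MvPowerSeries.constantCoeff_X]
    have : MvPowerSeries.constantCoeff (majorant (ζ j)) =
        ‖MvPowerSeries.coeff 0 (ζ j)‖ := rfl
    rw [this, hζord j 0 (by simp), norm_zero, zero_add]
  -- partial weighted sums
  set S : ℕ → ℝ := fun N => ∑ i : Fin n, T N r (majorant (ζ i)) with hS
  have hSnn : ∀ N, 0 ≤ S N :=
    fun N => Finset.sum_nonneg fun i _ => T_nonneg (NN.majorant _) hrpos.le
  have hTe : ∀ (N : ℕ) (j : Fin n), T N r (e j) ≤ r + S N := by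
    intro N j
    rw [he, T_add]
    apply add_le_add (T_X_le hrpos.le j)
    exact Finset.single_le_sum
      (fun i _ => T_nonneg (NN.majorant (ζ i)) hrpos.le) (Finset.mem_univ j)
  -- the key recursion
  have hrec : ∀ N : ℕ, r + S (N - 1) ≤ r₀ →
      δ * S N ≤ A * (r + S (N - 1)) ^ 2 / r₀ ^ 2 := by
    intro N hx
    set x : ℝ := r + S (N - 1) with hxdef
    have hxnn : 0 ≤ x := add_nonneg hrpos.le (hSnn _)
    have step1 : δ * S N ≤
        ∑ i : Fin n, ∑ Q ∈ DN n N, substCoeff (majorant (φ i)) e Q * r ^ deg Q := by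
      rw [hS, Finset.mul_sum]
      apply Finset.sum_le_sum
      intro i _
      rw [T, Finset.mul_sum]
      apply Finset.sum_le_sum
      intro Q _
      rw [coeff_majorant, ← mul_assoc]
      apply mul_le_mul_of_nonneg_right ?_ (pow_nonneg hrpos.le _)
      have h1 := hmaj i Q
      rwa [abs_of_nonneg (substCoeff_nonneg _ _ (NN.majorant _) heNN Q)] at h1
    have step2 : ∀ i : Fin n, ∑ Q ∈ DN n N, substCoeff (majorant (φ i)) e Q * r ^ deg Q ≤
        ∑ P ∈ Finset.Icc (0 : Fin n →₀ ℕ)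
            (Finsupp.equivFunOnFinite.symm fun _ : Fin n => N),
          MvPowerSeries.coeff P (majorant (φ i)) * T N r (∏ j : Fin n, e j ^ P j) := by
      intro i
      have hterm : ∀ Q ∈ DN n N, substCoeff (majorant (φ i)) e Q * r ^ deg Q ≤
          ∑ P ∈ Finset.Icc (0 : Fin n →₀ ℕ)
              (Finsupp.equivFunOnFinite.symm fun _ : Fin n => N),
            MvPowerSeries.coeff P (majorant (φ i)) * MvPowerSeries.coeff Q (∏ j : Fin n, e j ^ P j) * r ^ deg Q := by
        intro Q hQ
        rw [← Finset.sum_mul]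
        apply mul_le_mul_of_nonneg_right ?_ (pow_nonneg hrpos.le _)
        unfold substCoeff
        apply Finset.sum_le_sum_of_subset_of_nonneg
        · apply Finset.Icc_subset_Icc le_rfl
          intro j
          simp only [Finsupp.coe_equivFunOnFinite_symm]
          exact mem_DN.mp hQ
        · intro P _ _
          exact mul_nonneg (NN.majorant (φ i) P)
            (NN.prod _ _ (fun j _ => (heNN j).pow _) Q)
      calc ∑ Q ∈ DN n N, substCoeff (majorant (φ i)) e Q * r ^ deg Q
          ≤ ∑ Q ∈ DN n N, ∑ P ∈ Finset.Icc (0 : Fin n →₀ ℕ)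
              (Finsupp.equivFunOnFinite.symm fun _ : Fin n => N),
              MvPowerSeries.coeff P (majorant (φ i)) * MvPowerSeries.coeff Q (∏ j : Fin n, e j ^ P j) * r ^ deg Q :=
            Finset.sum_le_sum hterm
        _ = ∑ P ∈ Finset.Icc (0 : Fin n →₀ ℕ)
              (Finsupp.equivFunOnFinite.symm fun _ : Fin n => N),
              MvPowerSeries.coeff P (majorant (φ i)) * T N r (∏ j : Fin n, e j ^ P j) := by
            rw [Finset.sum_comm]
            apply Finset.sum_congr rfl
            intro P _
            rw [T, Finset.mul_sum]
            apply Finset.sum_congr rfl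
            intro Q _
            ring
    have step3 : ∀ i : Fin n,
        ∑ P ∈ Finset.Icc (0 : Fin n →₀ ℕ)
            (Finsupp.equivFunOnFinite.symm fun _ : Fin n => N),
          MvPowerSeries.coeff P (majorant (φ i)) * T N r (∏ j : Fin n, e j ^ P j) ≤
        (∑' P : Fin n →₀ ℕ, ‖MvPowerSeries.coeff P (φ i)‖ * r₀ ^ deg P)
          * (x ^ 2 / r₀ ^ 2) := by
      intro i
      have hterm : ∀ P ∈ Finset.Icc (0 : Fin n →₀ ℕ)
          (Finsupp.equivFunOnFinite.symm fun _ : Fin n => N),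
          MvPowerSeries.coeff P (majorant (φ i)) * T N r (∏ j : Fin n, e j ^ P j) ≤
          (‖MvPowerSeries.coeff P (φ i)‖ * r₀ ^ deg P) * (x ^ 2 / r₀ ^ 2) := by
        intro P _
        rcases Nat.lt_or_ge (deg P) 2 with hdP | hdP
        · have : MvPowerSeries.coeff P (majorant (φ i)) = 0 := by
            rw [coeff_majorant, hφord i P (by unfold deg at hdP; omega), norm_zero]
          rw [this, zero_mul]
          exact mul_nonneg (mul_nonneg (norm_nonneg _) (pow_nonneg hr₀pos.le _))
            (div_nonneg (sq_nonneg x) (sq_nonneg r₀))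
        · have h1 : T N r (∏ j : Fin n, e j ^ P j) ≤ x ^ deg P :=
            T_pow_prod_le e heNN he0 hrpos.le P hdP x (fun j => hTe (N - 1) j)
          have h2 : x ^ deg P ≤ r₀ ^ deg P * (x ^ 2 / r₀ ^ 2) := by
            have hd2 : deg P - 2 + 2 = deg P := by omega
            have : x ^ deg P = x ^ (deg P - 2) * x ^ 2 := by
              rw [← pow_add, hd2]
            rw [this]
            have h3 : x ^ (deg P - 2) ≤ r₀ ^ (deg P - 2) :=
              pow_le_pow_left₀ hxnn hx _
            have h4 : r₀ ^ deg P * (x ^ 2 / r₀ ^ 2) = r₀ ^ (deg P - 2) * x ^ 2 := by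
              rw [← hd2, pow_add, Nat.add_sub_cancel]
              field_simp
            rw [h4]
            exact mul_le_mul_of_nonneg_right h3 (sq_nonneg x)
          calc MvPowerSeries.coeff P (majorant (φ i)) * T N r (∏ j : Fin n, e j ^ P j)
              ≤ MvPowerSeries.coeff P (majorant (φ i)) * (r₀ ^ deg P * (x ^ 2 / r₀ ^ 2)) :=
                mul_le_mul_of_nonneg_left (h1.trans h2) (NN.majorant (φ i) P)
            _ = (‖MvPowerSeries.coeff P (φ i)‖ * r₀ ^ deg P) * (x ^ 2 / r₀ ^ 2) := by
                rw [coeff_majorant]; ring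
      calc ∑ P ∈ Finset.Icc (0 : Fin n →₀ ℕ)
            (Finsupp.equivFunOnFinite.symm fun _ : Fin n => N),
            MvPowerSeries.coeff P (majorant (φ i)) * T N r (∏ j : Fin n, e j ^ P j)
          ≤ ∑ P ∈ Finset.Icc (0 : Fin n →₀ ℕ)
            (Finsupp.equivFunOnFinite.symm fun _ : Fin n => N),
            (‖MvPowerSeries.coeff P (φ i)‖ * r₀ ^ deg P) * (x ^ 2 / r₀ ^ 2) :=
            Finset.sum_le_sum hterm
        _ = (∑ P ∈ Finset.Icc (0 : Fin n →₀ ℕ)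
            (Finsupp.equivFunOnFinite.symm fun _ : Fin n => N),
            ‖MvPowerSeries.coeff P (φ i)‖ * r₀ ^ deg P) * (x ^ 2 / r₀ ^ 2) := by
            rw [Finset.sum_mul]
        _ ≤ (∑' P : Fin n →₀ ℕ, ‖MvPowerSeries.coeff P (φ i)‖ * r₀ ^ deg P)
            * (x ^ 2 / r₀ ^ 2) := by
            apply mul_le_mul_of_nonneg_right ?_
              (div_nonneg (sq_nonneg x) (sq_nonneg r₀))
            exact Summable.sum_le_tsum _
              (fun P _ => mul_nonneg (norm_nonneg _) (pow_nonneg hr₀pos.le _))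
              (hsum i)
    calc δ * S N ≤ ∑ i : Fin n, ∑ Q ∈ DN n N,
          substCoeff (majorant (φ i)) e Q * r ^ deg Q := step1
      _ ≤ ∑ i : Fin n, (∑' P : Fin n →₀ ℕ,
            ‖MvPowerSeries.coeff P (φ i)‖ * r₀ ^ deg P) * (x ^ 2 / r₀ ^ 2) :=
          Finset.sum_le_sum fun i _ => (step2 i).trans (step3 i)
      _ = A * x ^ 2 / r₀ ^ 2 := by rw [← Finset.sum_mul, mul_div_assoc, hA]
  -- the inductive bound S N ≤ r
  have hSbound : ∀ N, S N ≤ r := by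
    intro N
    induction N with
    | zero =>
      have : S 0 = 0 := by
        rw [hS]
        apply Finset.sum_eq_zero
        intro i _
        apply Finset.sum_eq_zero
        intro Q hQ
        rw [coeff_majorant, hζord i Q ?_, norm_zero, zero_mul]
        exact le_trans (mem_DN.mp hQ) (by omega)
      rw [this]
      exact hrpos.le
    | succ N ih =>
      have hx0 : (0:ℝ) ≤ r + S N := add_nonneg hrpos.le (hSnn N)
      have hstep : r + S (N + 1 - 1) ≤ r₀ := by
        simp only [Nat.add_sub_cancel]
        linarith [hrr₀, ih]
      have h1 := hrec (N + 1) hstep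
      simp only [Nat.add_sub_cancel] at h1
      have hx2 : (r + S N) ^ 2 ≤ 4 * r ^ 2 := by nlinarith [ih, hSnn N, hrpos]
      have h5 : r * (4 * (A + 1)) ≤ δ * r₀ ^ 2 := (le_div_iff₀ h4A).mp hrA
      have hr2 : A * (r + S N) ^ 2 / r₀ ^ 2 ≤ δ * r := by
        rw [div_le_iff₀ (by positivity : (0:ℝ) < r₀ ^ 2)]
        nlinarith [mul_le_mul_of_nonneg_left hx2 hAnn,
          mul_le_mul_of_nonneg_right h5 hrpos.le, sq_nonneg r]
      exact le_of_mul_le_mul_left (h1.trans hr2) hδ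
  -- conclusion
  refine ⟨r, hrpos, fun i => ?_⟩
  apply summable_of_sum_le (c := r)
  · intro Q
    exact mul_nonneg (norm_nonneg _) (pow_nonneg hrpos.le _)
  · intro u
    set N : ℕ := u.sup deg with hN
    calc ∑ Q ∈ u, ‖MvPowerSeries.coeff Q (ζ i)‖ * r ^ (Q.sum fun _ k => k)
        ≤ ∑ Q ∈ DN n N, ‖MvPowerSeries.coeff Q (ζ i)‖ * r ^ (Q.sum fun _ k => k) := by
          apply Finset.sum_le_sum_of_subset_of_nonneg
          · intro Q hQ
            exact mem_DN.mpr (Finset.le_sup hQ)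
          · intro Q _ _
            exact mul_nonneg (norm_nonneg _) (pow_nonneg hrpos.le _)
      _ = T N r (majorant (ζ i)) := by
          apply Finset.sum_congr rfl
          intro Q _
          rw [coeff_majorant]
          rfl
      _ ≤ S N := Finset.single_le_sum
          (fun j _ => T_nonneg (NN.majorant (ζ j)) hrpos.le) (Finset.mem_univ i)
      _ ≤ r := hSbound N


end
end

section
/- Linearizability criterion for germs with root-of-unity multiplier: Let h be holomorphic on a neighborhood of 0 ∈ ℂ with h(0) = 0 and h′(0) = λ, where λ is a primitive m-th root of unity. Then h is holomorphically linearizable — i.e. there exists an injective holomorphic map f on a neighborhood of 0 with f(0) = 0 such that f⁻¹(h(f(z))) = λ·z for all z near 0 — if and only if the m-th iterate satisfies h^{∘m}(z) = z for all z in some neighborhood of 0. -/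
open Filter Topology

private lemma iter_analytic (h : ℂ → ℂ) (hh : AnalyticAt ℂ h 0) (hh0 : h 0 = 0) :
    ∀ k : ℕ, AnalyticAt ℂ (h^[k]) 0 ∧ h^[k] 0 = 0 := by
  intro k
  induction k with
  | zero => exact ⟨analyticAt_id, rfl⟩
  | succ n ih =>
    rw [Function.iterate_succ']
    refine ⟨AnalyticAt.comp ?_ ih.1, by simp [Function.comp, ih.2, hh0]⟩
    rw [ih.2]; exact hh

private lemma iter_deriv (h : ℂ → ℂ) (hh : AnalyticAt ℂ h 0) (hh0 : h 0 = 0)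
    (l : ℂ) (hl : deriv h 0 = l) :
    ∀ k : ℕ, deriv (h^[k]) 0 = l ^ k := by
  intro k
  induction k with
  | zero => simp [Function.iterate_zero, deriv_id']
  | succ n ih =>
    rw [Function.iterate_succ']
    have h1 := (iter_analytic h hh hh0 n).1
    have h2 := (iter_analytic h hh hh0 n).2
    rw [deriv_comp 0 (by rw [h2]; exact hh.differentiableAt) h1.differentiableAt,
      h2, hl, ih, pow_succ, mul_comm]

/-- **Linearizability criterion for germs with root-of-unity multiplier.** Let `h` be a
holomorphic germ at `0 ∈ ℂ` with `h(0) = 0` and `h′(0) = λ` a primitive `m`-th root of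
unity. Then `h` is holomorphically linearizable (conjugate to `z ↦ λ z` by an injective
holomorphic germ fixing `0`) if and only if `h^[m]` is the identity near `0`. -/
theorem linearizable_iff_iterate_eq_id
    (h : ℂ → ℂ) (hh : AnalyticAt ℂ h 0) (hh0 : h 0 = 0)
    (l : ℂ) (hl : deriv h 0 = l)
    (m : ℕ) (hm : 1 ≤ m) (hroot : l ^ m = 1)
    (hprim : ∀ k : ℕ, 1 ≤ k → k < m → l ^ k ≠ 1) :
    (∃ f : ℂ → ℂ, AnalyticAt ℂ f 0 ∧ f 0 = 0 ∧
        ∃ V ∈ 𝓝 (0 : ℂ), Set.InjOn f V ∧ ∀ z ∈ V, h (f z) = f (l * z)) ↔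
      ∀ᶠ z in 𝓝 (0 : ℂ), h^[m] z = z := by
  have hl0 : l ≠ 0 := by
    intro h0; rw [h0, zero_pow (by omega)] at hroot; exact zero_ne_one hroot
  constructor
  · rintro ⟨f, hf, hf0, V, hV, hinj, hfe⟩
    -- `f` is not eventually constant, hence open at 0
    have hopen : 𝓝 (f 0) ≤ Filter.map f (𝓝 0) := by
      rcases hf.eventually_constant_or_nhds_le_map_nhds with hc | ho
      · exfalso
        have hVe : ∀ᶠ w in 𝓝 (0:ℂ), w ∈ V := hV
        have h1 : ∀ᶠ w in 𝓝[≠] (0:ℂ), w ∈ V ∧ f w = f 0 :=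
          nhdsWithin_le_nhds (hVe.and hc)
        have h2 : ∀ᶠ w in 𝓝[≠] (0:ℂ), w ≠ 0 := self_mem_nhdsWithin
        have : (𝓝[≠] (0:ℂ)).NeBot := inferInstance
        obtain ⟨w, ⟨hwV, hwc⟩, hw0⟩ := (h1.and h2).exists
        exact hw0 (hinj hwV (mem_of_mem_nhds hV) hwc)
      · exact ho
    -- the conjugacy iterates
    have hWmem : ∀ n : ℕ, ∀ᶠ w in 𝓝 (0 : ℂ), ∀ j ≤ n, l ^ j * w ∈ V := by
      intro n
      induction n with
      | zero =>
        filter_upwards [hV] with w hw j hj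
        interval_cases j
        simpa using hw
      | succ n ih =>
        have ht : Filter.Tendsto (fun w : ℂ => l ^ (n+1) * w) (𝓝 0) (𝓝 0) := by
          have := (continuous_const.mul continuous_id :
            Continuous fun w : ℂ => l ^ (n+1) * w).tendsto (0 : ℂ)
          convert this using 2; exacts [rfl, (mul_zero (l ^ (n+1))).symm]
        filter_upwards [ih, ht.eventually_mem hV] with w hw1 hw2 j hj
        rcases eq_or_lt_of_le hj with hj' | hj'
        · rw [hj']; exact hw2
        · exact hw1 j (Nat.lt_succ_iff.mp hj')
    obtain ⟨W, hWnhds, hW⟩ := (hWmem m).exists_mem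
    have key : ∀ k ≤ m, ∀ w ∈ W, h^[k] (f w) = f (l ^ k * w) := by
      intro k
      induction k with
      | zero => intro _ w _; simp
      | succ n ih =>
        intro hn w hw
        rw [Function.iterate_succ_apply', ih (by omega) w hw,
          hfe _ (hW w hw n (by omega)), pow_succ, mul_comm (l ^ n) l, mul_assoc]
    have him : ∀ w ∈ W, h^[m] (f w) = f w := by
      intro w hw
      rw [key m le_rfl w hw, hroot, one_mul]
    rw [hf0] at hopen
    apply hopen
    rw [Filter.mem_map]
    exact Filter.mem_of_superset hWnhds (fun w hw => him w hw)
  · intro heq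
    -- averaging construction
    set g : ℂ → ℂ := fun z => (m : ℂ)⁻¹ * ∑ k ∈ Finset.range m, l⁻¹ ^ k * h^[k] z with hg_def
    have hm0 : (m : ℂ) ≠ 0 := Nat.cast_ne_zero.mpr (by omega)
    have hga : AnalyticAt ℂ g 0 := by
      apply analyticAt_const.mul
      apply Finset.analyticAt_fun_sum
      intro k _
      exact analyticAt_const.mul (iter_analytic h hh hh0 k).1
    have hg0 : g 0 = 0 := by
      simp [hg_def, (fun k => (iter_analytic h hh hh0 k).2)]
    have hgd : deriv g 0 = 1 := by
      have hsum : ∀ k ∈ Finset.range m, DifferentiableAt ℂ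
          (fun z => l⁻¹ ^ k * h^[k] z) (0:ℂ) :=
        fun k _ => (differentiableAt_const _).mul (iter_analytic h hh hh0 k).1.differentiableAt
      rw [hg_def]
      rw [deriv_const_mul _ (DifferentiableAt.fun_sum hsum)]
      rw [deriv_fun_sum hsum]
      have : ∀ k ∈ Finset.range m, deriv (fun z => l⁻¹ ^ k * h^[k] z) 0 = 1 := by
        intro k _
        rw [deriv_const_mul _ (iter_analytic h hh hh0 k).1.differentiableAt,
          iter_deriv h hh hh0 l hl k, ← mul_pow, inv_mul_cancel₀ hl0, one_pow]
      rw [Finset.sum_congr rfl this, Finset.sum_const, Finset.card_range, nsmul_eq_mul,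
        mul_one, inv_mul_cancel₀ hm0]
    -- functional equation for g
    have hgh : ∀ᶠ z in 𝓝 (0:ℂ), g (h z) = l * g z := by
      filter_upwards [heq] with z hz
      have hinv : l⁻¹ ^ m = 1 := by
        rw [inv_pow, hroot, inv_one]
      have key : ∑ k ∈ Finset.range m, l⁻¹ ^ k * h^[k] (h z)
          = l * ∑ k ∈ Finset.range m, l⁻¹ ^ k * h^[k] z := by
        have e1 : ∀ k, l⁻¹ ^ k * h^[k] (h z) = l * (l⁻¹ ^ (k+1) * h^[k+1] z) := by
          intro k
          rw [← Function.iterate_succ_apply h, pow_succ]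
          field_simp
        simp only [e1, ← Finset.mul_sum]
        congr 1
        have e2 : ∑ k ∈ Finset.range (m+1), l⁻¹ ^ k * h^[k] z
            = (∑ k ∈ Finset.range m, l⁻¹ ^ (k+1) * h^[k+1] z) + l⁻¹ ^ 0 * h^[0] z :=
          Finset.sum_range_succ' _ m
        have e3 : ∑ k ∈ Finset.range (m+1), l⁻¹ ^ k * h^[k] z
            = (∑ k ∈ Finset.range m, l⁻¹ ^ k * h^[k] z) + l⁻¹ ^ m * h^[m] z :=
          Finset.sum_range_succ _ m
        have e4 : l⁻¹ ^ m * h^[m] z = l⁻¹ ^ 0 * h^[0] z := by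
          simp [hinv, hz]
        rw [e3, e4] at e2
        exact (add_right_cancel e2).symm
      simp only [hg_def]
      rw [key]; ring
    -- local inverse of g
    obtain ⟨p, hp⟩ := hga
    have hL : HasStrictFDerivAt g (continuousMultilinearCurryFin1 ℂ ℂ ℂ (p 1)) 0 :=
      hp.hasStrictFDerivAt
    have hL1 : (continuousMultilinearCurryFin1 ℂ ℂ ℂ (p 1)) 1 = 1 := by
      have := hL.hasFDerivAt.hasDerivAt.deriv
      rw [hgd] at this
      exact this.symm
    set i : ℂ ≃L[ℂ] ℂ := ContinuousLinearEquiv.refl ℂ ℂ with hi_def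
    have hLid : (continuousMultilinearCurryFin1 ℂ ℂ ℂ (p 1)) = (i : ℂ →L[ℂ] ℂ) :=
      ContinuousLinearMap.ext_ring (by simp [hL1, hi_def])
    have hLe : HasStrictFDerivAt g (i : ℂ →L[ℂ] ℂ) 0 := hLid ▸ hL
    set G := hLe.toOpenPartialHomeomorph g with hG_def
    have hGcoe : (G : ℂ → ℂ) = g := hLe.toOpenPartialHomeomorph_coe
    have hGs : (0:ℂ) ∈ G.source := hLe.mem_toOpenPartialHomeomorph_source
    have hG0 : G 0 = 0 := by rw [hGcoe.symm] at hg0; exact hg0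
    have hGt : (0:ℂ) ∈ G.target := by
      have := G.map_source hGs; rwa [hG0] at this
    have hpG : HasFPowerSeriesAt (↑G) p 0 := by rw [hGcoe]; exact hp
    have hp1 : p 1 = (continuousMultilinearCurryFin1 ℂ ℂ ℂ).symm (i : ℂ →L[ℂ] ℂ) :=
      (continuousMultilinearCurryFin1 ℂ ℂ ℂ).eq_symm_apply.mpr hLid
    have hsymm := G.hasFPowerSeriesAt_symm hGs hpG hp1
    rw [hG0] at hsymm
    refine ⟨G.symm, ⟨_, hsymm⟩, ?_, ?_⟩
    · have := G.left_inv hGs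
      rw [hG0] at this; exact this
    · -- the conjugacy for f = G.symm
      have hf0 : G.symm 0 = 0 := by
        have := G.left_inv hGs; rw [hG0] at this; exact this
      have hsc : ContinuousAt G.symm 0 := G.continuousAt_symm hGt
      have hst : Filter.Tendsto G.symm (𝓝 0) (𝓝 0) := by
        have := hsc.tendsto; rwa [hf0] at this
      have hlt : Filter.Tendsto (fun z : ℂ => l * z) (𝓝 0) (𝓝 0) := by
        convert (continuous_const.mul continuous_id :
          Continuous fun z : ℂ => l * z).tendsto (0:ℂ) using 2; exacts [rfl, (mul_zero l).symm]
      have hht : Filter.Tendsto (fun z => h (G.symm z)) (𝓝 0) (𝓝 0) := by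
        have := (hh.continuousAt.tendsto).comp hst
        rwa [hh0] at this
      have hsrc : G.source ∈ 𝓝 (0:ℂ) := G.open_source.mem_nhds hGs
      have htar : G.target ∈ 𝓝 (0:ℂ) := G.open_target.mem_nhds hGt
      have hconj : ∀ᶠ z in 𝓝 (0:ℂ), h (G.symm z) = G.symm (l * z) := by
        filter_upwards [htar, hlt.eventually_mem htar, hst.eventually hgh,
          hht.eventually_mem hsrc] with z hz1 hz2 hz3 hz4
        have e5 : g (G.symm z) = z := by
          have := G.right_inv hz1; rw [hGcoe] at this; exact this
        have e6 : g (h (G.symm z)) = l * z := by rw [hz3, e5]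
        have e7 : g (G.symm (l * z)) = l * z := by
          have := G.right_inv hz2; rw [hGcoe] at this; exact this
        have hinjG : Set.InjOn g G.source := by rw [← hGcoe]; exact G.injOn
        exact hinjG hz4 (G.map_target hz2) (by rw [e6, e7])
      obtain ⟨T, hT, hTp⟩ := hconj.exists_mem
      refine ⟨T ∩ G.target, Filter.inter_mem hT htar, ?_, fun z hz => hTp z hz.1⟩
      have : Set.InjOn G.symm G.target := by
        have := G.symm.injOn
        rwa [OpenPartialHomeomorph.symm_source] at this
      exact this.mono Set.inter_subset_right
end

section
/- Exponential decay estimate for perturbed linear ODEs (Mattei-type estimate along spiral curves): Let μ ∈ ℂ with Re μ < 0, let T > 0, let a : [0,T] → ℂ be continuous with |a(t)| ≤ |Re μ| / (2|μ|) for all t ∈ [0,T], and let x : [0,T] → ℂ be differentiable with x′(t) = μ·x(t)·(1 + a(t)) for all t. Then |x(t)| ≤ |x(0)|·e^{(Re μ)·t/2} for all t ∈ [0,T]; in particular |x(t)| ≤ |x(0)| for all t. -/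
open Set

/-- **Exponential decay estimate for perturbed linear ODEs** (Mattei-type estimate along
spiral curves). If `Re μ < 0`, `a` is continuous on `[0,T]` with
`‖a t‖ ≤ |Re μ| / (2‖μ‖)`, and `x` solves `x′(t) = μ x(t)(1 + a(t))` on `[0,T]`, then
`‖x(t)‖ ≤ ‖x(0)‖ e^{(Re μ) t / 2}`; in particular `‖x(t)‖ ≤ ‖x(0)‖`. -/
theorem perturbed_linear_ode_decay
    (μ : ℂ) (hμ : μ.re < 0) (T : ℝ) (hT : 0 < T)
    (a : ℝ → ℂ) (ha : ContinuousOn a (Icc 0 T))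
    (hab : ∀ t ∈ Icc (0 : ℝ) T, ‖a t‖ ≤ |μ.re| / (2 * ‖μ‖))
    (x : ℝ → ℂ)
    (hx : ∀ t ∈ Icc (0 : ℝ) T, HasDerivWithinAt x (μ * x t * (1 + a t)) (Icc 0 T) t) :
    ∀ t ∈ Icc (0 : ℝ) T,
      ‖x t‖ ≤ ‖x 0‖ * Real.exp (μ.re * t / 2) ∧ ‖x t‖ ≤ ‖x 0‖ := by
  have hμ0 : μ ≠ 0 := fun h => by simp [h] at hμ
  have hμnorm : (0 : ℝ) < ‖μ‖ := norm_pos_iff.mpr hμ0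
  set y : ℝ → ℂ := fun t => x t * Complex.exp (-(μ * t)) with hy
  have hyd : ∀ t ∈ Icc (0:ℝ) T, HasDerivWithinAt y (μ * a t * y t) (Icc 0 T) t := by
    intro t ht
    have h1 : HasDerivAt (fun s : ℝ => -(μ * (s : ℂ))) (-μ) t := by
      convert ((Complex.ofRealCLM.hasDerivAt (x := t)).const_mul μ).neg using 1
      · rfl
      · funext s; simp
      · simp
    have he : HasDerivAt (fun s : ℝ => Complex.exp (-(μ * s)))
        (Complex.exp (-(μ * t)) * (-μ)) t := h1.cexp
    have := (hx t ht).mul (he.hasDerivWithinAt)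
    convert this using 1
    · rfl
    · rfl
    simp only [hy]
    ring
  have hcont : ContinuousOn y (Icc 0 T) := fun t ht => (hyd t ht).continuousWithinAt
  have key : ∀ t ∈ Icc (0:ℝ) T, ‖y t‖ ≤ gronwallBound ‖y 0‖ (-μ.re / 2) 0 (t - 0) := by
    apply norm_le_gronwallBound_of_norm_deriv_right_le hcont
    · intro t ht
      exact (hyd t (Ico_subset_Icc_self ht)).mono_of_mem_nhdsWithin (Icc_mem_nhdsGE_of_mem ht)
    · exact le_refl _
    · intro t ht
      have ht' := Ico_subset_Icc_self ht
      have h1 : ‖μ * a t * y t‖ = ‖μ‖ * ‖a t‖ * ‖y t‖ := by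
        simp [norm_mul]
      rw [h1, add_zero]
      have h2 : ‖μ‖ * ‖a t‖ ≤ -μ.re / 2 := by
        have := hab t ht'
        have habs : |μ.re| = -μ.re := abs_of_neg hμ
        calc ‖μ‖ * ‖a t‖ ≤ ‖μ‖ * (|μ.re| / (2 * ‖μ‖)) := by
              exact mul_le_mul_of_nonneg_left this hμnorm.le
          _ = -μ.re / 2 := by
              have hA : ‖μ‖ ≠ 0 := by
                simpa using hμnorm.ne'
              rw [habs]
              field_simp
      exact mul_le_mul_of_nonneg_right h2 (norm_nonneg _)
  intro t ht
  have hy0 : ‖y 0‖ = ‖x 0‖ := by simp [hy]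
  have hyt : ‖y t‖ = ‖x t‖ * Real.exp (-μ.re * t) := by
    simp only [hy, norm_mul, Complex.norm_exp]
    congr 1
    simp
  have hk := key t ht
  rw [gronwallBound_ε0, hy0, hyt, sub_zero] at hk
  have h3 : ‖x t‖ = (‖x t‖ * Real.exp (-μ.re * t)) * Real.exp (μ.re * t) := by
    rw [mul_assoc, ← Real.exp_add]; simp
  have hxle : ‖x t‖ ≤ ‖x 0‖ * Real.exp (μ.re * t / 2) := by
    calc ‖x t‖ = (‖x t‖ * Real.exp (-μ.re * t)) * Real.exp (μ.re * t) := h3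
      _ ≤ (‖x 0‖ * Real.exp (-μ.re / 2 * t)) * Real.exp (μ.re * t) :=
          mul_le_mul_of_nonneg_right hk (Real.exp_pos _).le
      _ = ‖x 0‖ * Real.exp (μ.re * t / 2) := by
          rw [mul_assoc, ← Real.exp_add]; ring_nf
  refine ⟨hxle, hxle.trans ?_⟩
  have : Real.exp (μ.re * t / 2) ≤ 1 := by
    apply Real.exp_le_one_iff.mpr
    have : μ.re * t ≤ 0 := mul_nonpos_of_nonpos_of_nonneg hμ.le ht.1
    linarith
  calc ‖x 0‖ * Real.exp (μ.re * t / 2) ≤ ‖x 0‖ * 1 :=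
      mul_le_mul_of_nonneg_left this (norm_nonneg _)
    _ = ‖x 0‖ := mul_one _
end
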